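/- For ε ≤ 1/4, any deterministic finite-state algorithm that maintains a Wε-additive approximation of the number of 1's in the last W bits of a binary stream has at least W(1−2ε) states; hence its memory in bits is more than log₂ W − 1, i.e., at least ⌊log₂ W⌋ bits. -/

import Mathlib

private lemma cnt_aux (W y : ℕ) :
    ((List.replicate W false ++ List.replicate y true).drop
      ((List.replicate W false ++ List.replicate y true).length - W)).count true = min y W := by
  simp only [List.length_append, List.length_replicate]
  rcases le_or_gt y W with h | h
  · rw [Nat.add_sub_cancel_left, List.drop_append_of_le_length (by simp [h]),
      List.drop_replicate]
    simp [min_eq_left h, List.count_replicate]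
  · obtain ⟨m, rfl⟩ : ∃ m, y = W + m := ⟨y - W, by omega⟩
    rw [Nat.add_sub_cancel_left]
    rw [show W + m = (List.replicate W false).length + m by simp, List.drop_append]
    simp [List.drop_replicate, List.count_replicate]

/-- For `ε ≤ 1/4`, any deterministic finite-state algorithm maintaining a
`W·ε`-additive approximation of the number of `1`'s in the last `W` bits has more than
`W(1 - 2ε)` states; hence its memory in bits (`⌈log₂ |S|⌉`) is at least `⌊log₂ W⌋`. -/
theorem stmt_1 (W : ℕ) (ε : ℝ) (hW : 0 < W) (hε : 0 < ε) (hε4 : ε ≤ 1 / 4)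
    (S : Type*) [Fintype S] (s₀ : S) (δ : S → Bool → S) (q : S → ℝ)
    (hcorrect : ∀ w : List Bool, W ≤ w.length →
      |q (w.foldl δ s₀) - ((w.drop (w.length - W)).count true : ℝ)| ≤ (W : ℝ) * ε) :
    (W : ℝ) * (1 - 2 * ε) < Fintype.card S ∧
      Nat.log 2 W ≤ Nat.clog 2 (Fintype.card S) := by
  set n := Fintype.card S with hn
  set F : ℕ → S := fun y => (List.replicate W false ++ List.replicate y true).foldl δ s₀
    with hF
  have hstep : ∀ a b : ℕ, F (a + b) = (List.replicate b true).foldl δ (F a) := by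
    intro a b
    simp only [hF, List.replicate_add, ← List.append_assoc, List.foldl_append]
  have hq : ∀ y : ℕ, |q (F y) - (min y W : ℕ)| ≤ (W : ℝ) * ε := by
    intro y
    have := hcorrect (List.replicate W false ++ List.replicate y true) (by simp)
    rwa [cnt_aux] at this
  obtain ⟨i, j, hij, hfeq⟩ := Fintype.exists_ne_map_eq_of_card_lt
    (fun i : Fin (n + 1) => F i) (by simp; exact hn.symm.le)
  wlog hlt : (i : ℕ) < (j : ℕ) generalizing i j
  · exact this j i hij.symm hfeq.symm (by have := Fin.val_ne_of_ne hij; omega)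
  set y : ℕ := (i : ℕ)
  set y' : ℕ := (j : ℕ)
  set d : ℕ := y' - y with hd
  have hd1 : 1 ≤ d := by omega
  have hyd : y + d = y' := by omega
  have hFy : F y' = F y := hfeq.symm
  have hpump : ∀ k : ℕ, F (y + k * d) = F y := by
    intro k
    induction k with
    | zero => simp
    | succ k ih =>
      have : y + (k + 1) * d = (y + k * d) + d := by ring
      rw [this, hstep, ih, ← hstep, hyd, hFy]
  -- query value close to both y (truncated) and W
  have h1 := hq y
  have h2 := hq (y + W * d)
  rw [hpump W] at h2
  have hminW : min (y + W * d) W = W := by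
    have : W ≤ y + W * d := by nlinarith
    omega
  rw [hminW] at h2
  have hyn : y < n := by
    have : (j : ℕ) ≤ n := by omega
    omega
  have hmle : ((min y W : ℕ) : ℝ) ≤ (y : ℝ) := Nat.cast_le.mpr (min_le_left y W)
  have habs1 := abs_le.mp h1
  have habs2 := abs_le.mp h2
  have hkey : (W : ℝ) * (1 - 2 * ε) ≤ (min y W : ℕ) := by nlinarith
  have hcast : (y : ℝ) < (n : ℝ) := by exact_mod_cast hyn
  have hmain : (W : ℝ) * (1 - 2 * ε) < n := by linarith
  refine ⟨hmain, ?_⟩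
  -- log part
  have hWn : W < 2 * n := by
    have h12 : (W : ℝ) * (1 / 2) ≤ (W : ℝ) * (1 - 2 * ε) := by
      have : (0:ℝ) ≤ W := by positivity
      nlinarith
    have : (W : ℝ) < 2 * n := by linarith
    exact_mod_cast this
  have hn1 : 1 ≤ n := by omega
  have hpow1 : 2 ^ Nat.log 2 W ≤ W := Nat.pow_log_le_self 2 (by omega)
  have hpow2 : n ≤ 2 ^ Nat.clog 2 n := Nat.le_pow_clog (by norm_num) n
  have hlt2 : 2 ^ Nat.log 2 W < 2 ^ (Nat.clog 2 n + 1) := by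
    rw [pow_succ]
    omega
  have := (Nat.pow_lt_pow_iff_right (by norm_num : 1 < 2)).mp hlt2
  omega
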